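/- Let K₀ : [0,a] → ℝ be in L²(0,a) and define F(k) = ∫₀^a K₀(t) sin(kt) dt for complex k. Then F(k) = o(e^{a|Im k|}) as |k| → ∞ in ℂ; i.e., for every ε > 0 there is R such that |F(k)| ≤ ε e^{a|Im k|} whenever |k| ≥ R. -/

import Mathlib

open MeasureTheory

lemma aux_abs_sin_le (z : ℂ) : ‖Complex.sin z‖ ≤ Real.exp |z.im| := by
  have h1 : ‖Complex.exp (-z * Complex.I)‖ = Real.exp z.im := by
    rw [Complex.norm_exp]; simp
  have h2 : ‖Complex.exp (z * Complex.I)‖ = Real.exp (-z.im) := by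
    rw [Complex.norm_exp]; simp
  have htri : ‖Complex.exp (-z * Complex.I) - Complex.exp (z * Complex.I)‖
      ≤ Real.exp z.im + Real.exp (-z.im) := by
    rw [← h1, ← h2]
    simpa using norm_sub_le (Complex.exp (-z * Complex.I))
      (Complex.exp (z * Complex.I))
  have e1 : Real.exp z.im ≤ Real.exp |z.im| := Real.exp_le_exp.2 (le_abs_self _)
  have e2 : Real.exp (-z.im) ≤ Real.exp |z.im| := Real.exp_le_exp.2 (neg_le_abs _)
  have : ‖Complex.sin z‖
      = ‖Complex.exp (-z * Complex.I) - Complex.exp (z * Complex.I)‖ / 2 := by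
    rw [Complex.sin]
    simp [norm_div, norm_mul, Complex.norm_I, Complex.norm_two]
  rw [this]
  linarith

lemma aux_abs_cos_le (z : ℂ) : ‖Complex.cos z‖ ≤ Real.exp |z.im| := by
  have h1 : ‖Complex.exp (-z * Complex.I)‖ = Real.exp z.im := by
    rw [Complex.norm_exp]; simp
  have h2 : ‖Complex.exp (z * Complex.I)‖ = Real.exp (-z.im) := by
    rw [Complex.norm_exp]; simp
  have htri : ‖Complex.exp (z * Complex.I) + Complex.exp (-z * Complex.I)‖
      ≤ Real.exp (-z.im) + Real.exp z.im := by
    rw [← h1, ← h2]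
    simpa using norm_add_le (Complex.exp (z * Complex.I))
      (Complex.exp (-z * Complex.I))
  have e1 : Real.exp z.im ≤ Real.exp |z.im| := Real.exp_le_exp.2 (le_abs_self _)
  have e2 : Real.exp (-z.im) ≤ Real.exp |z.im| := Real.exp_le_exp.2 (neg_le_abs _)
  have : ‖Complex.cos z‖
      = ‖Complex.exp (z * Complex.I) + Complex.exp (-z * Complex.I)‖ / 2 := by
    rw [Complex.cos]
    simp [norm_div, Complex.norm_two]
  rw [this]
  linarith

/-- For K₀ ∈ L²(0,a), F(k) = ∫₀^a K₀(t) sin(kt) dt satisfies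
F(k) = o(e^{a|Im k|}) as |k| → ∞. -/
theorem stmt_4 (a : ℝ) (ha : 0 < a) (K₀ : ℝ → ℝ)
    (hK : MemLp K₀ 2 (volume.restrict (Set.Ioc 0 a))) :
    ∀ ε > 0, ∃ R : ℝ, ∀ k : ℂ, R ≤ ‖k‖ →
      ‖∫ t in (0:ℝ)..a, (K₀ t : ℂ) * Complex.sin (k * t)‖ ≤
        ε * Real.exp (a * |k.im|) := by
  intro ε hε
  -- K₀ is integrable on (0, a]
  haveI : Fact (volume (Set.Ioc (0:ℝ) a) < ⊤) :=
    ⟨by rw [Real.volume_Ioc]; exact ENNReal.ofReal_lt_top⟩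
  have hKint : IntegrableOn K₀ (Set.Ioc 0 a) volume := by
    have := hK.mono_exponent (p := 1) (by norm_num)
    exact memLp_one_iff_integrable.mp this
  -- approximate by a continuous function
  set K₁ : ℝ → ℝ := (Set.Ioc 0 a).indicator K₀ with hK₁def
  have hK₁int : Integrable K₁ := (integrable_indicator_iff measurableSet_Ioc).mpr hKint
  obtain ⟨g, hgsupp, hgapprox, hgcont, hgint⟩ :=
    hK₁int.exists_hasCompactSupport_integral_sub_le (show (0:ℝ) < ε/4 by linarith)
  -- approximate the continuous function by a polynomial
  obtain ⟨p, hp⟩ := exists_polynomial_near_of_continuousOn 0 a g hgcont.continuousOn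
    (ε/(4*a)) (by positivity)
  set P : ℝ → ℝ := fun t => Polynomial.eval t p with hPdef
  set P' : ℝ → ℝ := fun t => Polynomial.eval t p.derivative with hP'def
  have hPcont : Continuous P := p.continuous
  have hP'cont : Continuous P' := p.derivative.continuous
  set C : ℝ := |P a| + |P 0| + ∫ t in (0:ℝ)..a, |P' t| with hCdef
  have hintP' : (0:ℝ) ≤ ∫ t in (0:ℝ)..a, |P' t| :=
    intervalIntegral.integral_nonneg ha.le (fun t _ => abs_nonneg _)
  have hC0 : 0 ≤ C := by positivity
  refine ⟨max 1 (2*C/ε), ?_⟩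
  intro k hk
  have hk1 : 1 ≤ ‖k‖ := le_trans (le_max_left _ _) hk
  have hk2 : 2*C/ε ≤ ‖k‖ := le_trans (le_max_right _ _) hk
  have hkpos : 0 < ‖k‖ := lt_of_lt_of_le one_pos hk1
  have hkne : k ≠ 0 := by
    intro h; rw [h] at hkpos; simp at hkpos
  set E : ℝ := Real.exp (a * |k.im|) with hEdef
  have hEpos : 0 < E := Real.exp_pos _
  have hE1 : 1 ≤ E := Real.one_le_exp (by positivity)
  -- pointwise bounds for sin/cos on [0, a]
  have him : ∀ t : ℝ, ((k : ℂ) * (t : ℂ)).im = k.im * t := by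
    intro t; simp [Complex.mul_im]
  have hsinb : ∀ t : ℝ, 0 ≤ t → t ≤ a → ‖Complex.sin (k * t)‖ ≤ E := by
    intro t ht0 hta
    refine (aux_abs_sin_le _).trans ?_
    rw [hEdef]
    apply Real.exp_le_exp.2
    rw [him t, abs_mul, abs_of_nonneg ht0, mul_comm a]
    exact mul_le_mul_of_nonneg_left hta (abs_nonneg _)
  have hcosb : ∀ t : ℝ, 0 ≤ t → t ≤ a → ‖Complex.cos (k * t)‖ ≤ E := by
    intro t ht0 hta
    refine (aux_abs_cos_le _).trans ?_
    rw [hEdef]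
    apply Real.exp_le_exp.2
    rw [him t, abs_mul, abs_of_nonneg ht0, mul_comm a]
    exact mul_le_mul_of_nonneg_left hta (abs_nonneg _)
  -- continuity of sin(k t)
  have hsincont : Continuous fun t : ℝ => Complex.sin (k * t) :=
    Complex.continuous_sin.comp (continuous_const.mul Complex.continuous_ofReal)
  -- integrabilities
  have hKC : IntegrableOn (fun t => (K₀ t : ℂ)) (Set.Ioc 0 a) volume := hKint.ofReal
  have hKsin : IntervalIntegrable (fun t => (K₀ t : ℂ) * Complex.sin (k * t)) volume 0 a := by
    rw [intervalIntegrable_iff_integrableOn_Ioc_of_le ha.le]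
    have hb : ∀ᵐ t : ℝ ∂(volume.restrict (Set.Ioc (0:ℝ) a)),
        ‖Complex.sin (k * t)‖ ≤ E := by
      rw [ae_restrict_iff' measurableSet_Ioc]
      exact Filter.Eventually.of_forall fun t ht => by
        simpa using hsinb t ht.1.le ht.2
    have := Integrable.bdd_mul (c := E) hKC hsincont.aestronglyMeasurable hb
    exact this.congr (Filter.Eventually.of_forall fun t => by ring)
  have hPsin : IntervalIntegrable (fun t => (P t : ℂ) * Complex.sin (k * t)) volume 0 a :=
    ((Complex.continuous_ofReal.comp hPcont).mul hsincont).intervalIntegrable 0 a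
  have hdiffsin : IntervalIntegrable
      (fun t => ((K₀ t - P t : ℝ) : ℂ) * Complex.sin (k * t)) volume 0 a := by
    have := hKsin.sub hPsin
    exact this.congr_ae (Filter.Eventually.of_forall fun t => by push_cast; ring)
  -- splitting
  have hsplit : (∫ t in (0:ℝ)..a, (K₀ t : ℂ) * Complex.sin (k * t)) =
      (∫ t in (0:ℝ)..a, ((K₀ t - P t : ℝ) : ℂ) * Complex.sin (k * t)) +
      ∫ t in (0:ℝ)..a, (P t : ℂ) * Complex.sin (k * t) := by
    rw [← intervalIntegral.integral_add hdiffsin hPsin]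
    congr 1
    ext t
    push_cast
    ring
  -- L¹ bound on K₀ - P
  have hKPint : IntegrableOn (fun t => |K₀ t - P t|) (Set.Ioc 0 a) volume :=
    (hKint.sub (hPcont.integrableOn_Ioc)).abs
  have hKPii : IntervalIntegrable (fun t => |K₀ t - P t|) volume 0 a := by
    rw [intervalIntegrable_iff_integrableOn_Ioc_of_le ha.le]; exact hKPint
  have hgii : IntervalIntegrable (fun t => |K₀ t - g t|) volume 0 a := by
    rw [intervalIntegrable_iff_integrableOn_Ioc_of_le ha.le]
    exact (hKint.sub (hgcont.integrableOn_Ioc)).abs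
  have hgPii : IntervalIntegrable (fun t => |g t - P t|) volume 0 a :=
    (hgcont.sub hPcont).abs.intervalIntegrable 0 a
  have hL1a : (∫ t in (0:ℝ)..a, |K₀ t - g t|) ≤ ε/4 := by
    rw [intervalIntegral.integral_of_le ha.le]
    have heq : (∫ t in Set.Ioc (0:ℝ) a, |K₀ t - g t|) =
        ∫ t in Set.Ioc (0:ℝ) a, |K₁ t - g t| := by
      refine setIntegral_congr_fun measurableSet_Ioc fun t ht => ?_
      rw [hK₁def, Set.indicator_of_mem ht]
    rw [heq]
    refine le_trans (setIntegral_le_integral ((hK₁int.sub hgint).abs)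
      (Filter.Eventually.of_forall fun t => abs_nonneg _)) ?_
    simpa [Real.norm_eq_abs] using hgapprox
  have hL1b : (∫ t in (0:ℝ)..a, |g t - P t|) ≤ ε/4 := by
    have hmono : (∫ t in (0:ℝ)..a, |g t - P t|) ≤ ∫ _t in (0:ℝ)..a, ε/(4*a) := by
      refine intervalIntegral.integral_mono_on ha.le hgPii
        (intervalIntegrable_const) fun t ht => ?_
      rw [abs_sub_comm]
      exact (hp t ht).le
    refine hmono.trans ?_
    rw [intervalIntegral.integral_const, smul_eq_mul, sub_zero]
    have : a * (ε/(4*a)) = ε/4 := by field_simp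
    exact this.le
  have hL1 : (∫ t in (0:ℝ)..a, |K₀ t - P t|) ≤ ε/2 := by
    have hpt : (∫ t in (0:ℝ)..a, |K₀ t - P t|) ≤
        ∫ t in (0:ℝ)..a, (|K₀ t - g t| + |g t - P t|) := by
      refine intervalIntegral.integral_mono_on ha.le hKPii (hgii.add hgPii) fun t _ => ?_
      calc |K₀ t - P t| = |(K₀ t - g t) + (g t - P t)| := by ring_nf
        _ ≤ |K₀ t - g t| + |g t - P t| := abs_add_le _ _
    rw [intervalIntegral.integral_add hgii hgPii] at hpt
    linarith
  -- first term bound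
  have h1 : ‖∫ t in (0:ℝ)..a, ((K₀ t - P t : ℝ) : ℂ) * Complex.sin (k * t)‖ ≤
      (ε/2) * E := by
    have hb : ‖∫ t in (0:ℝ)..a, ((K₀ t - P t : ℝ) : ℂ) * Complex.sin (k * t)‖ ≤
        |∫ t in (0:ℝ)..a, |K₀ t - P t| * E| := by
      refine intervalIntegral.norm_integral_le_abs_of_norm_le ?_ (hKPii.mul_const E)
      rw [Set.uIoc_of_le ha.le, ae_restrict_iff' measurableSet_Ioc]
      refine Filter.Eventually.of_forall fun t ht => ?_
      rw [norm_mul, Complex.norm_real, Real.norm_eq_abs]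
      exact mul_le_mul_of_nonneg_left (by simpa using hsinb t ht.1.le ht.2) (abs_nonneg _)
    refine hb.trans ?_
    rw [intervalIntegral.integral_mul_const, abs_of_nonneg (mul_nonneg
      (intervalIntegral.integral_nonneg ha.le fun t _ => abs_nonneg _) hEpos.le)]
    exact mul_le_mul_of_nonneg_right hL1 hEpos.le
  -- integration by parts for the polynomial term
  have hu : ∀ x ∈ Set.uIcc (0:ℝ) a,
      HasDerivAt (fun t : ℝ => (P t : ℂ)) ((P' x : ℂ)) x :=
    fun x _ => (Polynomial.hasDerivAt p x).ofReal_comp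
  have hvC : ∀ z : ℂ, HasDerivAt (fun w : ℂ => -Complex.cos (k * w) / k)
      (Complex.sin (k * z)) z := by
    intro z
    have hlin : HasDerivAt (fun w : ℂ => k * w) k z := by
      simpa using (hasDerivAt_id z).const_mul k
    have hcos : HasDerivAt (fun w : ℂ => Complex.cos (k * w))
        (-Complex.sin (k * z) * k) z := (Complex.hasDerivAt_cos (k * z)).comp z hlin
    have := (hcos.neg).div_const k
    have heq : - (-Complex.sin (k * z) * k) / k = Complex.sin (k * z) := by
      field_simp
    rwa [heq] at this
  have hv : ∀ x ∈ Set.uIcc (0:ℝ) a,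
      HasDerivAt (fun t : ℝ => -Complex.cos (k * t) / k) (Complex.sin (k * x)) x :=
    fun x _ => (hvC x).comp_ofReal
  have hu'int : IntervalIntegrable (fun t : ℝ => (P' t : ℂ)) volume 0 a :=
    (Complex.continuous_ofReal.comp hP'cont).intervalIntegrable 0 a
  have hv'int : IntervalIntegrable (fun t : ℝ => Complex.sin (k * t)) volume 0 a :=
    hsincont.intervalIntegrable 0 a
  have hibp := intervalIntegral.integral_mul_deriv_eq_deriv_mul hu hv hu'int hv'int
  -- bound the polynomial term
  have hcos0 : ‖-Complex.cos (k * (0:ℝ)) / k‖ = 1 / ‖k‖ := by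
    simp [norm_div]
  have hintb : ‖∫ t in (0:ℝ)..a, (P' t : ℂ) * (-Complex.cos (k * t) / k)‖ ≤
      (∫ t in (0:ℝ)..a, |P' t|) * (E / ‖k‖) := by
    have hb : ‖∫ t in (0:ℝ)..a, (P' t : ℂ) * (-Complex.cos (k * t) / k)‖ ≤
        |∫ t in (0:ℝ)..a, |P' t| * (E / ‖k‖)| := by
      refine intervalIntegral.norm_integral_le_abs_of_norm_le ?_
        ((hP'cont.abs.intervalIntegrable 0 a).mul_const _)
      rw [Set.uIoc_of_le ha.le, ae_restrict_iff' measurableSet_Ioc]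
      refine Filter.Eventually.of_forall fun t ht => ?_
      rw [norm_mul, Complex.norm_real, Real.norm_eq_abs,
        norm_div]
      refine mul_le_mul_of_nonneg_left ?_ (abs_nonneg _)
      rw [norm_neg]
      gcongr
      exact hcosb t ht.1.le ht.2
    refine hb.trans ?_
    rw [intervalIntegral.integral_mul_const,
      abs_of_nonneg (mul_nonneg hintP' (by positivity))]
  have h2 : ‖∫ t in (0:ℝ)..a, (P t : ℂ) * Complex.sin (k * t)‖ ≤
      (ε/2) * E := by
    rw [hibp]
    have hta : ‖(P a : ℂ) * (-Complex.cos (k * (a:ℝ)) / k)‖ ≤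
        |P a| * (E / ‖k‖) := by
      rw [norm_mul, Complex.norm_real, Real.norm_eq_abs, norm_div, norm_neg]
      refine mul_le_mul_of_nonneg_left ?_ (abs_nonneg _)
      gcongr
      exact hcosb a ha.le le_rfl
    have ht0 : ‖(P 0 : ℂ) * (-Complex.cos (k * ((0:ℝ):ℂ)) / k)‖ ≤
        |P 0| * (E / ‖k‖) := by
      rw [norm_mul, Complex.norm_real, Real.norm_eq_abs]
      refine mul_le_mul_of_nonneg_left ?_ (abs_nonneg _)
      rw [show (k * ((0:ℝ):ℂ)) = 0 by simp, Complex.cos_zero, norm_div, norm_neg,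
        norm_one]
      gcongr
    have htri : ‖(P a : ℂ) * (-Complex.cos (k * (a:ℝ)) / k) -
        (P 0 : ℂ) * (-Complex.cos (k * ((0:ℝ):ℂ)) / k) -
        ∫ t in (0:ℝ)..a, (P' t : ℂ) * (-Complex.cos (k * t) / k)‖ ≤
        ‖(P a : ℂ) * (-Complex.cos (k * (a:ℝ)) / k)‖ +
        ‖(P 0 : ℂ) * (-Complex.cos (k * ((0:ℝ):ℂ)) / k)‖ +
        ‖∫ t in (0:ℝ)..a, (P' t : ℂ) * (-Complex.cos (k * t) / k)‖ := by
      set x := (P a : ℂ) * (-Complex.cos (k * (a:ℝ)) / k)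
      set y := (P 0 : ℂ) * (-Complex.cos (k * ((0:ℝ):ℂ)) / k)
      set z := ∫ t in (0:ℝ)..a, (P' t : ℂ) * (-Complex.cos (k * t) / k)
      calc ‖x - y - z‖ ≤ ‖x - y‖ + ‖z‖ := by
            simpa using norm_sub_le (x - y) z
        _ ≤ ‖x‖ + ‖y‖ + ‖z‖ := by
            have := norm_sub_le x y
            linarith
    have hsum : ‖(P a : ℂ) * (-Complex.cos (k * (a:ℝ)) / k) -
        (P 0 : ℂ) * (-Complex.cos (k * ((0:ℝ):ℂ)) / k) -
        ∫ t in (0:ℝ)..a, (P' t : ℂ) * (-Complex.cos (k * t) / k)‖ ≤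
        C * (E / ‖k‖) := by
      rw [hCdef]
      calc _ ≤ _ := htri
        _ ≤ |P a| * (E / ‖k‖) + |P 0| * (E / ‖k‖) +
            (∫ t in (0:ℝ)..a, |P' t|) * (E / ‖k‖) := by
          exact add_le_add (add_le_add hta ht0) hintb
        _ = (|P a| + |P 0| + ∫ t in (0:ℝ)..a, |P' t|) * (E / ‖k‖) := by ring
    refine hsum.trans ?_
    have hck : C / ‖k‖ ≤ ε/2 := by
      rw [div_le_iff₀ hkpos]
      rw [div_le_iff₀ hε] at hk2
      nlinarith
    calc C * (E / ‖k‖) = (C / ‖k‖) * E := by ring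
      _ ≤ (ε/2) * E := mul_le_mul_of_nonneg_right hck hEpos.le
  rw [hsplit]
  calc ‖_ + _‖ ≤ _ + _ := norm_add_le _ _
    _ ≤ (ε/2) * E + (ε/2) * E := add_le_add h1 h2
    _ = ε * E := by ring
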